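/- Let q be a power of an odd prime p. Then there exist q + 1 pairwise mutually unbiased orthonormal bases of ℂ^q; namely, the standard basis together with the q bases B_a = {q^{-1/2}(ω_p^{tr(a x² + b x)})_{x ∈ F_q} : b ∈ F_q} for a ∈ F_q. -/

import Mathlib

open scoped InnerProductSpace

/-- The vector `v_{a,b} = q^{-1/2} (ω_p^{tr(a x² + b x)})_{x ∈ F_q}` of `ℂ^q`,
where `ω_p = exp(2πi/p)` and `tr` is the absolute trace from `F_q` to `F_p`. -/
noncomputable def v (p : ℕ) (F : Type) [Field F] [Fintype F] [Algebra (ZMod p) F]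
    (a b : F) : EuclideanSpace ℂ F :=
  WithLp.toLp 2 fun x => (1 / Real.sqrt (Fintype.card F) : ℂ) *
    Complex.exp (2 * Real.pi * Complex.I *
      (ZMod.val (Algebra.trace (ZMod p) F (a * x ^ 2 + b * x)) : ℂ) / p)

/-- The family consisting of the standard basis (index `none`) and the bases
`B_a` for `a ∈ F_q` (index `some a`). -/
noncomputable def W (p : ℕ) (F : Type) [Field F] [Fintype F] [DecidableEq F] [Algebra (ZMod p) F] :
    Option F → F → EuclideanSpace ℂ F
  | none => fun y => EuclideanSpace.single y (1 : ℂ)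
  | some a => fun b => v p F a b


section Aux
variable (p : ℕ) [Fact p.Prime] (F : Type) [Field F] [Fintype F] [Algebra (ZMod p) F]

noncomputable def myPsi : AddChar F ℂ :=
  (AddChar.zmodChar p
    ((Complex.isPrimitiveRoot_exp p (Nat.Prime.ne_zero Fact.out)).pow_eq_one)).compAddMonoidHom
    (Algebra.trace (ZMod p) F).toAddMonoidHom

theorem myPsi_apply (x : F) : myPsi p F x =
    Complex.exp (2 * Real.pi * Complex.I *
      (ZMod.val (Algebra.trace (ZMod p) F x) : ℂ) / p) := by
  rw [myPsi, AddChar.compAddMonoidHom_apply, AddChar.zmodChar_apply,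
    ← Complex.exp_nat_mul]
  congr 1
  simp only [LinearMap.toAddMonoidHom_coe]
  push_cast
  ring

theorem myPsi_ne_zero (x : F) : myPsi p F x ≠ 0 := by
  rw [myPsi_apply]; exact Complex.exp_ne_zero _

theorem myPsi_conj (x : F) : (starRingEnd ℂ) (myPsi p F x) = myPsi p F (-x) := by
  have h1 : myPsi p F (-x) * myPsi p F x = 1 := by
    rw [← AddChar.map_add_eq_mul, neg_add_cancel, AddChar.map_zero_eq_one]
  have h2 : (starRingEnd ℂ) (myPsi p F x) * myPsi p F x = 1 := by
    rw [myPsi_apply, ← Complex.exp_conj, ← Complex.exp_add]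
    rw [show (1 : ℂ) = Complex.exp 0 from (Complex.exp_zero).symm]
    congr 1
    have h3 : (starRingEnd ℂ) (2 * Real.pi * Complex.I *
        (ZMod.val (Algebra.trace (ZMod p) F x) : ℂ) / p) =
        -(2 * Real.pi * Complex.I * (ZMod.val (Algebra.trace (ZMod p) F x) : ℂ) / p) := by
      simp only [map_div₀, map_mul, Complex.conj_I, map_natCast, map_ofNat,
        Complex.conj_ofReal]
      ring
    rw [h3]; ring
  exact mul_right_cancel₀ (myPsi_ne_zero p F x) (h2.trans h1.symm)

theorem myPsi_abs (x : F) : ‖myPsi p F x‖ = 1 := by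
  have h2 : (starRingEnd ℂ) (myPsi p F x) * myPsi p F x = 1 := by
    rw [myPsi_conj, ← AddChar.map_add_eq_mul, neg_add_cancel, AddChar.map_zero_eq_one]
  have := Complex.normSq_eq_conj_mul_self (z := myPsi p F x)
  rw [h2] at this
  have hn : Complex.normSq (myPsi p F x) = 1 := by exact_mod_cast this
  rw [Complex.norm_def, hn, Real.sqrt_one]

end Aux

section Aux2
variable (p : ℕ) [Fact p.Prime] (F : Type) [Field F] [Fintype F] [Algebra (ZMod p) F]

theorem sum_myPsi_mul (e : F) (he : e ≠ 0) : ∑ y : F, myPsi p F (e * y) = 0 := by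
  haveI : Module.Finite (ZMod p) F := Module.finite_iff_finite.mpr (by infer_instance)
  obtain ⟨b, hb⟩ : ∃ b, Algebra.trace (ZMod p) F (e * b) ≠ 0 := by
    have htr := (traceForm_nondegenerate (ZMod p) F).1 e
    simp_rw [Algebra.traceForm_apply] at htr
    by_contra! hf
    exact he (htr hf)
  have hne : (myPsi p F).mulShift e ≠ 0 := by
    rw [AddChar.ne_zero_iff]
    refine ⟨b, ?_⟩
    rw [AddChar.mulShift_apply, myPsi, AddChar.compAddMonoidHom_apply,
      AddChar.zmodChar_apply]
    have hprim := Complex.isPrimitiveRoot_exp p (Nat.Prime.ne_zero Fact.out)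
    have hvpos : 0 < ZMod.val ((Algebra.trace (ZMod p) F).toAddMonoidHom (e * b)) := by
      refine Nat.pos_of_ne_zero fun h0 => hb ?_
      have := (ZMod.val_eq_zero _).mp h0
      exact this
    have hvlt : ZMod.val ((Algebra.trace (ZMod p) F).toAddMonoidHom (e * b)) < p :=
      ZMod.val_lt _
    exact hprim.pow_ne_one_of_pos_of_lt hvpos.ne' hvlt
  have := AddChar.sum_eq_zero_iff_ne_zero.mpr hne
  simpa [AddChar.mulShift_apply] using this

theorem quad_sum (hp : Odd p) (c d : F) (hc : c ≠ 0) :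
    (starRingEnd ℂ) (∑ x : F, myPsi p F (c * x ^ 2 + d * x)) *
      (∑ x : F, myPsi p F (c * x ^ 2 + d * x)) = (Fintype.card F : ℂ) := by
  have h2 : (2 : F) ≠ 0 := by
    haveI : CharP F p := charP_of_injective_ringHom (algebraMap (ZMod p) F).injective p
    rw [show (2 : F) = ((2 : ℕ) : F) by norm_num, Ne, CharP.cast_eq_zero_iff F p]
    intro hdvd
    have hp2 : p = 2 := (Nat.prime_dvd_prime_iff_eq Fact.out Nat.prime_two).mp hdvd
    rw [hp2] at hp
    exact (Nat.not_odd_iff_even.mpr (by norm_num)) hp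
  rw [map_sum]
  simp_rw [myPsi_conj]
  rw [Finset.sum_mul_sum]
  have key : ∀ y : F, ∑ x : F, myPsi p F (-(c * y ^ 2 + d * y)) * myPsi p F (c * x ^ 2 + d * x)
      = ∑ u : F, myPsi p F (c * u ^ 2 + d * u) * myPsi p F ((2 * c * u) * y) := by
    intro y
    rw [← Equiv.sum_comp (Equiv.addRight y)
      (fun x => myPsi p F (-(c * y ^ 2 + d * y)) * myPsi p F (c * x ^ 2 + d * x))]
    refine Finset.sum_congr rfl fun u _ => ?_
    simp only [Equiv.coe_addRight]
    rw [← AddChar.map_add_eq_mul, ← AddChar.map_add_eq_mul]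
    congr 1
    ring
  calc ∑ y : F, ∑ x : F,
        myPsi p F (-(c * y ^ 2 + d * y)) * myPsi p F (c * x ^ 2 + d * x)
      = ∑ y : F, ∑ u : F, myPsi p F (c * u ^ 2 + d * u) * myPsi p F ((2 * c * u) * y) := by
        exact Finset.sum_congr rfl fun y _ => key y
    _ = ∑ u : F, myPsi p F (c * u ^ 2 + d * u) * ∑ y : F, myPsi p F ((2 * c * u) * y) := by
        rw [Finset.sum_comm]
        exact Finset.sum_congr rfl fun u _ => (Finset.mul_sum _ _ _).symm
    _ = (Fintype.card F : ℂ) := by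
        rw [Finset.sum_eq_single 0]
        · simp [AddChar.map_zero_eq_one, Finset.card_univ]
        · intro u _ hu
          have : (2 : F) * c * u ≠ 0 := by
            exact mul_ne_zero (mul_ne_zero h2 hc) hu
          rw [sum_myPsi_mul p F _ this, mul_zero]
        · intro h; exact absurd (Finset.mem_univ 0) h

end Aux2


section Aux3
variable (p : ℕ) [Fact p.Prime] (F : Type) [Field F] [Fintype F] [Algebra (ZMod p) F]

theorem v_apply (a b x : F) :
    v p F a b x = (1 / Real.sqrt (Fintype.card F) : ℂ) * myPsi p F (a * x ^ 2 + b * x) := by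
  rw [myPsi_apply]; rfl

theorem card_pos' : 0 < (Fintype.card F : ℝ) := by
  exact_mod_cast Fintype.card_pos

theorem sqrt_mul_self' :
    ((1 / Real.sqrt (Fintype.card F) : ℂ)) * ((1 / Real.sqrt (Fintype.card F) : ℂ))
      = ((Fintype.card F : ℂ))⁻¹ := by
  rw [div_mul_div_comm, one_mul]
  norm_cast
  rw [Real.mul_self_sqrt (le_of_lt (card_pos' F))]
  push_cast
  rw [one_div]

theorem conj_scale :
    (starRingEnd ℂ) ((1 / Real.sqrt (Fintype.card F) : ℂ)) =
      ((1 / Real.sqrt (Fintype.card F) : ℂ)) := by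
  rw [map_div₀, map_one, Complex.conj_ofReal]

theorem inner_v (a b a' b' : F) :
    ⟪v p F a b, v p F a' b'⟫_ℂ =
      ((Fintype.card F : ℂ))⁻¹ * ∑ x : F, myPsi p F ((a' - a) * x ^ 2 + (b' - b) * x) := by
  rw [PiLp.inner_apply, Finset.mul_sum]
  simp only [RCLike.inner_apply]
  refine Finset.sum_congr rfl fun x _ => ?_
  rw [v_apply, v_apply, map_mul, myPsi_conj, conj_scale]
  rw [mul_mul_mul_comm, sqrt_mul_self', ← AddChar.map_add_eq_mul]
  congr 2
  ring

theorem orthonormal_v (a : F) : Orthonormal ℂ (fun b => v p F a b) := by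
  classical
  rw [orthonormal_iff_ite]
  intro b b'
  rw [inner_v]
  rcases eq_or_ne b b' with rfl | hbb
  · simp only [if_pos rfl, sub_self]
    have : ∀ x : F, myPsi p F ((0 : F) * x ^ 2 + (0 : F) * x) = 1 := fun x => by
      simp [AddChar.map_zero_eq_one]
    rw [Finset.sum_congr rfl fun x _ => this x, Finset.sum_const, Finset.card_univ,
      nsmul_eq_mul, mul_one, inv_mul_cancel₀ (by exact_mod_cast Fintype.card_ne_zero)]
    simp
  · rw [if_neg hbb]
    have : ∀ x : F, ((a - a) * x ^ 2 + (b' - b) * x) = (b' - b) * x := fun x => by ring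
    rw [Finset.sum_congr rfl fun x _ => by rw [this x]]
    rw [sum_myPsi_mul p F _ (sub_ne_zero.mpr (Ne.symm hbb)), mul_zero]

end Aux3

/-- For `q` a power of an odd prime `p`, the standard basis together with the `q`
bases `B_a`, `a ∈ F_q`, form `q + 1` pairwise mutually unbiased orthonormal
bases of `ℂ^q`. -/
theorem exists_q_add_one_mubs (p : ℕ) [Fact p.Prime] (hp : Odd p)
    (F : Type) [Field F] [Fintype F] [DecidableEq F] [Algebra (ZMod p) F] :
    Fintype.card (Option F) = Fintype.card F + 1 ∧
    (∀ o : Option F,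
      ∃ B : OrthonormalBasis F ℂ (EuclideanSpace ℂ F), ∀ b : F, B b = W p F o b) ∧
    (∀ o o' : Option F, o ≠ o' → ∀ b b' : F,
      ‖⟪W p F o b, W p F o' b'⟫_ℂ‖ ^ 2 = 1 / Fintype.card F) := by
  have hq0 : (Fintype.card F : ℝ) ≠ 0 := by exact_mod_cast Fintype.card_ne_zero
  have habs_s : ‖((1 / Real.sqrt (Fintype.card F) : ℂ))‖ =
      1 / Real.sqrt (Fintype.card F) := by
    rw [norm_div, norm_one, Complex.norm_real, Real.norm_eq_abs, abs_of_nonneg (Real.sqrt_nonneg _)]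
  have hsq : (1 / Real.sqrt (Fintype.card F)) ^ 2 = 1 / (Fintype.card F : ℝ) := by
    rw [div_pow, one_pow, Real.sq_sqrt (le_of_lt (card_pos' F))]
  have hsingle : ∀ (a' b b' : F),
      ‖⟪EuclideanSpace.single b (1 : ℂ), v p F a' b'⟫_ℂ‖ ^ 2 =
        1 / (Fintype.card F : ℝ) := by
    intro a' b b'
    rw [EuclideanSpace.inner_single_left, map_one, one_mul, v_apply, norm_mul,
      myPsi_abs, mul_one, habs_s, hsq]
  refine ⟨Fintype.card_option, ?_, ?_⟩
  · rintro (_ | a)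
    · exact ⟨EuclideanSpace.basisFun F ℂ, fun b => by
        rw [EuclideanSpace.basisFun_apply]; rfl⟩
    · have hcard : Fintype.card F = Module.finrank ℂ (EuclideanSpace ℂ F) :=
        (finrank_euclideanSpace).symm
      have hv := orthonormal_v p F a
      have hv' : Orthonormal ℂ (basisOfOrthonormalOfCardEqFinrank hv hcard) := by
        rwa [coe_basisOfOrthonormalOfCardEqFinrank]
      refine ⟨(basisOfOrthonormalOfCardEqFinrank hv hcard).toOrthonormalBasis hv',
        fun b => ?_⟩
      rw [Module.Basis.coe_toOrthonormalBasis, coe_basisOfOrthonormalOfCardEqFinrank]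
      rfl
  · rintro (_ | a) (_ | a') hne b b'
    · exact absurd rfl hne
    · exact hsingle a' b b'
    · rw [show ⟪W p F (some a) b, W p F none b'⟫_ℂ =
          (starRingEnd ℂ) ⟪W p F none b', W p F (some a) b⟫_ℂ from
            (inner_conj_symm _ _).symm, Complex.norm_conj]
      exact hsingle a b' b
    · have haa : a ≠ a' := fun h => hne (by rw [h])
      have hS := quad_sum p F hp (a' - a) (b' - b) (sub_ne_zero.mpr (Ne.symm haa))
      show ‖⟪v p F a b, v p F a' b'⟫_ℂ‖ ^ 2 = _
      rw [inner_v]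
      have h1 : Complex.normSq (∑ x : F, myPsi p F ((a' - a) * x ^ 2 + (b' - b) * x)) =
          Fintype.card F := by
        have h2 := Complex.normSq_eq_conj_mul_self
          (z := ∑ x : F, myPsi p F ((a' - a) * x ^ 2 + (b' - b) * x))
        rw [hS] at h2
        exact_mod_cast h2
      rw [Complex.sq_norm, Complex.normSq_mul, h1, Complex.normSq_inv,
        Complex.normSq_natCast]
      field_simp
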